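/- Let 𝒜 be a nonempty finite set and (p_a)_{a∈𝒜} a probability vector with p_a > 0 for all a ∈ 𝒜. Then there exists C > 0 such that for every integer n ≥ 1 and every family (k_a)_{a∈𝒜} of natural numbers with Σ_{a∈𝒜} k_a = n, one has (n! / ∏_{a∈𝒜} k_a!) · ∏_{a∈𝒜} p_a^{k_a} ≤ C · n^{−(|𝒜|−1)/2}. -/

import Mathlib

noncomputable section

open Real Filter Finset

lemma mb_fact_up (n : ℕ) (hn : 1 ≤ n) :
    (n.factorial : ℝ) ≤ exp 1 * Real.sqrt n * ((n : ℝ) / exp 1) ^ n := by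
  have hs : Stirling.stirlingSeq n ≤ exp 1 / Real.sqrt 2 := by
    obtain ⟨m, rfl⟩ := Nat.exists_eq_succ_of_ne_zero (Nat.one_le_iff_ne_zero.mp hn)
    have := Stirling.stirlingSeq'_antitone (Nat.zero_le m)
    simpa [Stirling.stirlingSeq_one] using this
  have hd : (0:ℝ) < Real.sqrt (2 * n) * ((n : ℝ) / exp 1) ^ n := by
    have hn' : (0:ℝ) < n := by exact_mod_cast hn
    positivity
  rw [Stirling.stirlingSeq] at hs
  have h2 : (n.factorial : ℝ) ≤ (exp 1 / Real.sqrt 2) * (Real.sqrt (2 * n) * ((n : ℝ) / exp 1) ^ n) := by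
    have := (div_le_iff₀ hd).mp hs
    linarith
  calc (n.factorial : ℝ) ≤ (exp 1 / Real.sqrt 2) * (Real.sqrt (2 * n) * ((n : ℝ) / exp 1) ^ n) := h2
    _ = exp 1 * Real.sqrt n * ((n : ℝ) / exp 1) ^ n := by
        rw [Real.sqrt_mul (by norm_num : (0:ℝ) ≤ 2)]
        have h2p : (0:ℝ) < Real.sqrt 2 := by positivity
        field_simp

lemma mb_fact_low0 (k : ℕ) : ((k : ℝ) / exp 1) ^ k ≤ (k.factorial : ℝ) := by
  have h := Real.pow_div_factorial_le_exp (k:ℝ) (Nat.cast_nonneg k) k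
  have hek : exp (k : ℝ) = exp 1 ^ k := by
    rw [← Real.exp_nat_mul]; norm_num
  rw [hek] at h
  have hf : (0:ℝ) < (k.factorial : ℝ) := by exact_mod_cast k.factorial_pos
  have he : (0:ℝ) < exp 1 ^ k := by positivity
  rw [div_pow, div_le_iff₀ he]
  calc (k:ℝ)^k = (k:ℝ)^k / k.factorial * k.factorial := by field_simp
    _ ≤ exp 1 ^ k * k.factorial := by nlinarith
    _ = (k.factorial:ℝ) * exp 1 ^ k := by ring

lemma mb_fact_low1 (k : ℕ) (hk : 1 ≤ k) :
    Real.sqrt k * ((k : ℝ) / exp 1) ^ k ≤ (k.factorial : ℝ) := by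
  have hpi : Real.sqrt π ≤ Stirling.stirlingSeq k := by
    obtain ⟨m, rfl⟩ := Nat.exists_eq_succ_of_ne_zero (Nat.one_le_iff_ne_zero.mp hk)
    exact Antitone.le_of_tendsto Stirling.stirlingSeq'_antitone
      (Stirling.tendsto_stirlingSeq_sqrt_pi.comp (tendsto_add_atTop_nat 1)) m
  have hge1 : (1:ℝ) ≤ Real.sqrt π := by
    rw [show (1:ℝ) = Real.sqrt 1 by simp]
    exact Real.sqrt_le_sqrt (le_of_lt (by linarith [Real.pi_gt_three]))
  have h1 : (1:ℝ) ≤ Stirling.stirlingSeq k := le_trans hge1 hpi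
  rw [Stirling.stirlingSeq] at h1
  have hk' : (0:ℝ) < k := by exact_mod_cast hk
  have hd : (0:ℝ) < Real.sqrt (2 * k) * ((k : ℝ) / exp 1) ^ k := by positivity
  have h2 : Real.sqrt (2 * k) * ((k : ℝ) / exp 1) ^ k ≤ (k.factorial : ℝ) := by
    have := (le_div_iff₀ hd).mp h1
    linarith
  refine le_trans ?_ h2
  have : Real.sqrt k ≤ Real.sqrt (2 * k) := Real.sqrt_le_sqrt (by linarith)
  have hp : (0:ℝ) ≤ ((k : ℝ) / exp 1) ^ k := by positivity
  nlinarith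

lemma mb_log (y : ℝ) (hy : 0 < y) : Real.log y ≤ 2 * (Real.sqrt y - 1) := by
  have h1 : Real.log (Real.sqrt y) ≤ Real.sqrt y - 1 :=
    Real.log_le_sub_one_of_pos (Real.sqrt_pos.mpr hy)
  have h2 : Real.log y = 2 * Real.log (Real.sqrt y) := by
    rw [Real.log_sqrt hy.le]; ring
  linarith

lemma mb_ratio (s : ℝ) (hs : 0 < s) (k : ℕ) :
    (s / k) ^ k ≤ Real.exp (2 * Real.sqrt (k * s) - 2 * k) := by
  rcases Nat.eq_zero_or_pos k with rfl | hk
  · simp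
  have hk' : (0:ℝ) < k := by exact_mod_cast hk
  have hpos : (0:ℝ) < s / k := by positivity
  have h1 : (s / k) ^ k = Real.exp ((k : ℝ) * Real.log (s / k)) := by
    rw [Real.exp_nat_mul, Real.exp_log hpos]
  rw [h1]
  apply Real.exp_le_exp.mpr
  have h2 : Real.log (s / k) ≤ 2 * (Real.sqrt (s / k) - 1) := mb_log _ hpos
  have h3 : (k : ℝ) * Real.sqrt (s / k) = Real.sqrt (k * s) := by
    rw [show (k:ℝ) * s = (k:ℝ)^2 * (s / k) by field_simp,
      Real.sqrt_mul (by positivity), Real.sqrt_sq hk'.le]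
  nlinarith [mul_le_mul_of_nonneg_left h2 hk'.le]

lemma mb_amgm (u v : ℝ) (hu : 0 ≤ u) (hv : 0 ≤ v) :
    2 * Real.sqrt (u * v) ≤ u + v := by
  rw [Real.sqrt_mul hu]
  nlinarith [sq_nonneg (Real.sqrt u - Real.sqrt v), Real.sq_sqrt hu, Real.sq_sqrt hv,
    Real.sqrt_nonneg u, Real.sqrt_nonneg v]

lemma mb_gap (kk s : ℝ) (hk : 0 ≤ kk) (hs : 0 < s) (h : kk ≤ s / 2) :
    2 * Real.sqrt (kk * s) ≤ kk + s - s / 12 := by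
  have hu := Real.sqrt_nonneg s
  have hv := Real.sqrt_nonneg kk
  have hu2 := Real.sq_sqrt hs.le
  have hv2 := Real.sq_sqrt hk
  rw [Real.sqrt_mul hk]
  nlinarith [sq_nonneg (3 * Real.sqrt s - 4 * Real.sqrt kk)]

lemma mb_sqrt_le (n : ℕ) (hn : 1 ≤ n) : Real.sqrt n ≤ (n:ℝ) := by
  have h1 : (1:ℝ) ≤ (n:ℝ) := by exact_mod_cast hn
  calc Real.sqrt n ≤ Real.sqrt ((n:ℝ)^2) := Real.sqrt_le_sqrt (by nlinarith)
    _ = (n:ℝ) := Real.sqrt_sq (by linarith)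

lemma mb_split (n k : ℕ) (q : ℝ) (hn : 0 < n) :
    q ^ k / ((k:ℝ) / exp 1) ^ k = ((n:ℝ) * q / k) ^ k * (exp 1 / n) ^ k := by
  rcases Nat.eq_zero_or_pos k with rfl | hk
  · simp
  have hk' : (0:ℝ) < k := by exact_mod_cast hk
  have hn' : (0:ℝ) < n := by exact_mod_cast hn
  rw [← mul_pow, ← div_pow]
  congr 1
  field_simp

lemma mb_key0 (n k : ℕ) (q : ℝ) (hq : 0 < q) (hn : 0 < n) :
    q ^ k / (k.factorial : ℝ) ≤
      Real.exp (2 * Real.sqrt (k * ((n:ℝ) * q)) - 2 * k) * (exp 1 / n) ^ k := by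
  have hd : (0:ℝ) < ((k:ℝ) / exp 1) ^ k := by
    rcases Nat.eq_zero_or_pos k with rfl | hk
    · simp
    · have : (0:ℝ) < k := by exact_mod_cast hk
      positivity
  have h1 : q ^ k / (k.factorial : ℝ) ≤ q ^ k / ((k:ℝ) / exp 1) ^ k :=
    div_le_div_of_nonneg_left (by positivity) hd (mb_fact_low0 k)
  calc q ^ k / (k.factorial : ℝ) ≤ q ^ k / ((k:ℝ) / exp 1) ^ k := h1
    _ = ((n:ℝ) * q / k) ^ k * (exp 1 / n) ^ k := mb_split n k q hn
    _ ≤ Real.exp (2 * Real.sqrt (k * ((n:ℝ) * q)) - 2 * k) * (exp 1 / n) ^ k := by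
        apply mul_le_mul_of_nonneg_right (mb_ratio _ (by positivity) k) (by positivity)

lemma mb_key1 (n k : ℕ) (q : ℝ) (hq : 0 < q) (hn : 0 < n) (hk : 1 ≤ k) :
    q ^ k / (k.factorial : ℝ) ≤
      Real.exp (2 * Real.sqrt (k * ((n:ℝ) * q)) - 2 * k) * (exp 1 / n) ^ k
        * (Real.sqrt k)⁻¹ := by
  have hk' : (0:ℝ) < k := by exact_mod_cast hk
  have hsk : (0:ℝ) < Real.sqrt k := Real.sqrt_pos.mpr hk'
  have hd : (0:ℝ) < Real.sqrt k * ((k:ℝ) / exp 1) ^ k := by positivity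
  have h1 : q ^ k / (k.factorial : ℝ) ≤ q ^ k / (Real.sqrt k * ((k:ℝ) / exp 1) ^ k) :=
    div_le_div_of_nonneg_left (by positivity) hd (mb_fact_low1 k hk)
  have h2 : q ^ k / (Real.sqrt k * ((k:ℝ) / exp 1) ^ k)
      = (q ^ k / ((k:ℝ) / exp 1) ^ k) * (Real.sqrt k)⁻¹ := by
    field_simp
  rw [h2, mb_split n k q hn] at h1
  calc q ^ k / (k.factorial : ℝ) ≤ ((n:ℝ) * q / k) ^ k * (exp 1 / n) ^ k * (Real.sqrt k)⁻¹ := h1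
    _ ≤ _ := by
        apply mul_le_mul_of_nonneg_right _ (by positivity)
        exact mul_le_mul_of_nonneg_right (mb_ratio _ (by positivity) k) (by positivity)

/-- **Multinomial bound.**  For a strictly positive probability vector `(p_a)_{a∈𝒜}` there is a
constant `C > 0` such that every multinomial probability with `n` trials is at most
`C·n^{-(|𝒜|-1)/2}`. -/
theorem multinomial_sup_bound {A : Type} [Fintype A] [Nonempty A]
    (p : A → ℝ) (hp : ∀ a, 0 < p a) (hpsum : ∑ a, p a = 1) :
    ∃ C : ℝ, 0 < C ∧ ∀ n : ℕ, 1 ≤ n → ∀ k : A → ℕ, ∑ a, k a = n →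
      (n.factorial : ℝ) / (∏ a, ((k a).factorial : ℝ)) * ∏ a, p a ^ k a
        ≤ C * (n : ℝ) ^ (-(((Fintype.card A : ℝ) - 1) / 2)) := by
  classical
  set d := Fintype.card A with hd
  have hdpos : 0 < d := Fintype.card_pos
  have hne : (Finset.univ : Finset A).Nonempty := Finset.univ_nonempty
  set pmin := Finset.univ.inf' hne p with hpm
  have hpmin : 0 < pmin := (Finset.lt_inf'_iff hne).mpr (fun a _ => hp a)
  have hple : ∀ a, pmin ≤ p a := fun a => Finset.inf'_le _ (Finset.mem_univ a)
  set c := pmin / 12 with hc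
  have hcpos : 0 < c := by positivity
  set K := ∏ a, Real.sqrt (p a / 2) with hK
  have hKpos : 0 < K := Finset.prod_pos (fun a _ => Real.sqrt_pos.mpr (by linarith [hp a]))
  set C1 := exp 1 / K with hC1
  set C2 := exp 1 * ((d+1).factorial : ℝ) / c ^ (d+1) with hC2
  have hC1pos : 0 < C1 := by positivity
  have hC2pos : 0 < C2 := by
    have : (0:ℝ) < ((d+1).factorial : ℝ) := by exact_mod_cast (d+1).factorial_pos
    positivity
  refine ⟨max C1 C2, lt_max_of_lt_left hC1pos, ?_⟩
  intro n hn k hsum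
  have hn' : (0:ℝ) < n := by exact_mod_cast hn
  have hrpos : (0:ℝ) < (n:ℝ) ^ (-(((d:ℝ) - 1) / 2)) := Real.rpow_pos_of_pos hn' _
  have hLHS : (n.factorial:ℝ) / (∏ a, ((k a).factorial:ℝ)) * ∏ a, p a ^ k a
      = (n.factorial:ℝ) * ∏ a, (p a ^ k a / ((k a).factorial : ℝ)) := by
    rw [Finset.prod_div_distrib]; ring
  set S := ∑ a, (2 * Real.sqrt ((k a : ℝ) * ((n:ℝ) * p a)) - 2 * (k a : ℝ)) with hS
  have hsum' : ∑ a, (k a : ℝ) = n := by exact_mod_cast hsum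
  have hnp : ∑ a, (n:ℝ) * p a = n := by rw [← Finset.mul_sum, hpsum, mul_one]
  have hterm_le : ∀ a, 2 * Real.sqrt ((k a : ℝ) * ((n:ℝ) * p a)) - 2 * (k a : ℝ)
      ≤ (n:ℝ) * p a - (k a : ℝ) := by
    intro a
    have := mb_amgm (k a) ((n:ℝ) * p a) (Nat.cast_nonneg _) (mul_nonneg hn'.le (hp a).le)
    linarith
  have hB : (n.factorial : ℝ) * (exp 1 / n) ^ n ≤ exp 1 * Real.sqrt n := by
    have hfu := mb_fact_up n hn
    have hprod : ((n:ℝ) / exp 1) ^ n * (exp 1 / (n:ℝ)) ^ n = 1 := by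
      rw [← mul_pow, show ((n:ℝ) / exp 1) * (exp 1 / n) = 1 by field_simp]
      simp
    calc (n.factorial : ℝ) * (exp 1 / n) ^ n
        ≤ (exp 1 * Real.sqrt n * ((n:ℝ) / exp 1) ^ n) * (exp 1 / n) ^ n :=
          mul_le_mul_of_nonneg_right hfu (by positivity)
      _ = exp 1 * Real.sqrt n * (((n:ℝ) / exp 1) ^ n * (exp 1 / n) ^ n) := by ring
      _ = exp 1 * Real.sqrt n := by rw [hprod, mul_one]
  by_cases hcase : ∀ a, (n:ℝ) * p a / 2 ≤ (k a : ℝ)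
  · -- all k a large
    have hone : ∀ a, 1 ≤ k a := by
      intro a
      by_contra h
      push_neg at h
      have hk0 : k a = 0 := by omega
      have := hcase a
      rw [hk0] at this
      have hpa := hp a
      simp at this
      nlinarith
    have hexpS : Real.exp S ≤ 1 := by
      rw [Real.exp_le_one_iff]
      have : S ≤ ∑ a, ((n:ℝ) * p a - (k a : ℝ)) := Finset.sum_le_sum (fun a _ => hterm_le a)
      rw [Finset.sum_sub_distrib, hnp, hsum'] at this
      linarith
    have hstep : (n.factorial:ℝ) * ∏ a, (p a ^ k a / ((k a).factorial : ℝ))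
        ≤ (n.factorial:ℝ) * ∏ a, (Real.exp (2 * Real.sqrt ((k a : ℝ) * ((n:ℝ) * p a)) - 2 * (k a : ℝ))
              * (exp 1 / n) ^ k a * (Real.sqrt (k a))⁻¹) := by
      apply mul_le_mul_of_nonneg_left _ (Nat.cast_nonneg _)
      apply Finset.prod_le_prod
        (fun a _ => div_nonneg (pow_nonneg (hp a).le _) (Nat.cast_nonneg _))
        (fun a _ => mb_key1 n (k a) (p a) (hp a) hn (hone a))
    have hprodeq : ∏ a, (Real.exp (2 * Real.sqrt ((k a : ℝ) * ((n:ℝ) * p a)) - 2 * (k a : ℝ))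
              * (exp 1 / n) ^ k a * (Real.sqrt (k a))⁻¹)
        = Real.exp S * (exp 1 / (n:ℝ)) ^ n * (∏ a, Real.sqrt (k a))⁻¹ := by
      rw [Finset.prod_mul_distrib, Finset.prod_mul_distrib, ← Real.exp_sum,
        Finset.prod_pow_eq_pow_sum, hsum, ← Finset.prod_inv_distrib, hS]
    have hsqprod : Real.sqrt n ^ d * K ≤ ∏ a, Real.sqrt (k a) := by
      have h1 : ∏ a, Real.sqrt ((n:ℝ) * (p a / 2)) ≤ ∏ a, Real.sqrt (k a) := by
        apply Finset.prod_le_prod (fun a _ => Real.sqrt_nonneg _)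
        intro a _
        apply Real.sqrt_le_sqrt
        have := hcase a
        linarith
      calc Real.sqrt n ^ d * K = ∏ a, (Real.sqrt n * Real.sqrt (p a / 2)) := by
            rw [Finset.prod_mul_distrib, Finset.prod_const, Finset.card_univ, hK, hd]
        _ = ∏ a, Real.sqrt ((n:ℝ) * (p a / 2)) :=
            Finset.prod_congr rfl (fun a _ => (Real.sqrt_mul hn'.le _).symm)
        _ ≤ _ := h1
    have hsqpos : (0:ℝ) < Real.sqrt n ^ d * K := by positivity
    have hinv : (∏ a, Real.sqrt (k a))⁻¹ ≤ (Real.sqrt n ^ d * K)⁻¹ :=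
      inv_anti₀ hsqpos hsqprod
    have hfinal : exp 1 * Real.sqrt n * (Real.sqrt n ^ d * K)⁻¹
        = C1 * (n:ℝ) ^ (-(((d:ℝ) - 1) / 2)) := by
      have hsqrt : Real.sqrt n = (n:ℝ) ^ ((1:ℝ)/2) := Real.sqrt_eq_rpow (n:ℝ)
      have hpow : Real.sqrt n ^ d = (n:ℝ) ^ ((d:ℝ)/2) := by
        rw [hsqrt, ← Real.rpow_natCast ((n:ℝ) ^ ((1:ℝ)/2)) d, ← Real.rpow_mul hn'.le]
        congr 1
        ring
      rw [hpow, hsqrt, mul_inv, hC1]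
      rw [show (exp 1 * (n:ℝ) ^ ((1:ℝ)/2) * (((n:ℝ) ^ ((d:ℝ)/2))⁻¹ * K⁻¹))
          = (exp 1 / K) * ((n:ℝ) ^ ((1:ℝ)/2) * ((n:ℝ) ^ ((d:ℝ)/2))⁻¹) by field_simp]
      congr 1
      rw [← Real.rpow_neg hn'.le, ← Real.rpow_add hn']
      congr 1
      ring
    have hprodpos : (0:ℝ) < ∏ a, Real.sqrt (k a) := by
      apply Finset.prod_pos
      intro a _
      have : (0:ℝ) < k a := by exact_mod_cast hone a
      exact Real.sqrt_pos.mpr this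
    calc (n.factorial:ℝ) / (∏ a, ((k a).factorial:ℝ)) * ∏ a, p a ^ k a
        = (n.factorial:ℝ) * ∏ a, (p a ^ k a / ((k a).factorial : ℝ)) := hLHS
      _ ≤ (n.factorial:ℝ) * (Real.exp S * (exp 1 / (n:ℝ)) ^ n * (∏ a, Real.sqrt (k a))⁻¹) := by
          rw [← hprodeq]; exact hstep
      _ = ((n.factorial:ℝ) * (exp 1 / (n:ℝ)) ^ n) * Real.exp S * (∏ a, Real.sqrt (k a))⁻¹ := by
          ring
      _ ≤ (exp 1 * Real.sqrt n) * 1 * (Real.sqrt n ^ d * K)⁻¹ := by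
          apply mul_le_mul _ hinv (by positivity) (by positivity)
          apply mul_le_mul hB hexpS (Real.exp_nonneg _) (by positivity)
      _ = C1 * (n:ℝ) ^ (-(((d:ℝ) - 1) / 2)) := by rw [mul_one]; exact hfinal
      _ ≤ max C1 C2 * (n:ℝ) ^ (-(((d:ℝ) - 1) / 2)) :=
          mul_le_mul_of_nonneg_right (le_max_left _ _) hrpos.le
  · -- some k a small
    push_neg at hcase
    obtain ⟨a0, ha0⟩ := hcase
    have hSneg : S ≤ -(c * n) := by
      have hgap : 2 * Real.sqrt ((k a0 : ℝ) * ((n:ℝ) * p a0)) - 2 * (k a0 : ℝ)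
          ≤ (n:ℝ) * p a0 - (k a0 : ℝ) - ((n:ℝ) * p a0) / 12 := by
        have := mb_gap (k a0) ((n:ℝ) * p a0) (Nat.cast_nonneg _) (mul_pos hn' (hp a0))
          (by linarith)
        linarith
      have hsplit : S = (2 * Real.sqrt ((k a0 : ℝ) * ((n:ℝ) * p a0)) - 2 * (k a0 : ℝ))
          + ∑ a ∈ Finset.univ.erase a0,
            (2 * Real.sqrt ((k a : ℝ) * ((n:ℝ) * p a)) - 2 * (k a : ℝ)) := by
        rw [hS, ← Finset.add_sum_erase _ _ (Finset.mem_univ a0)]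
      have hsplit2 : ((n:ℝ) * p a0 - (k a0 : ℝ))
          + ∑ a ∈ Finset.univ.erase a0, ((n:ℝ) * p a - (k a : ℝ)) = 0 := by
        rw [Finset.add_sum_erase _ (fun a => (n:ℝ) * p a - (k a : ℝ)) (Finset.mem_univ a0),
          Finset.sum_sub_distrib, hnp, hsum']
        ring
      have herased : ∑ a ∈ Finset.univ.erase a0,
            (2 * Real.sqrt ((k a : ℝ) * ((n:ℝ) * p a)) - 2 * (k a : ℝ))
          ≤ ∑ a ∈ Finset.univ.erase a0, ((n:ℝ) * p a - (k a : ℝ)) :=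
        Finset.sum_le_sum (fun a _ => hterm_le a)
      have hp0 : c * n ≤ (n:ℝ) * p a0 / 12 := by
        have := hple a0
        rw [hc]
        nlinarith
      linarith
    have hstep : (n.factorial:ℝ) * ∏ a, (p a ^ k a / ((k a).factorial : ℝ))
        ≤ (n.factorial:ℝ) * ∏ a, (Real.exp (2 * Real.sqrt ((k a : ℝ) * ((n:ℝ) * p a)) - 2 * (k a : ℝ))
              * (exp 1 / n) ^ k a) := by
      apply mul_le_mul_of_nonneg_left _ (Nat.cast_nonneg _)
      apply Finset.prod_le_prod
        (fun a _ => div_nonneg (pow_nonneg (hp a).le _) (Nat.cast_nonneg _))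
        (fun a _ => mb_key0 n (k a) (p a) (hp a) hn)
    have hprodeq : ∏ a, (Real.exp (2 * Real.sqrt ((k a : ℝ) * ((n:ℝ) * p a)) - 2 * (k a : ℝ))
              * (exp 1 / n) ^ k a)
        = Real.exp S * (exp 1 / (n:ℝ)) ^ n := by
      rw [Finset.prod_mul_distrib, ← Real.exp_sum, Finset.prod_pow_eq_pow_sum, hsum, hS]
    -- tail bound : exp 1 * sqrt n * exp (-(c*n)) ≤ C2 * n ^ (-(d:ℝ))
    have hsn : Real.sqrt n ≤ (n:ℝ) := mb_sqrt_le n hn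
    have hfacd : (0:ℝ) < ((d+1).factorial : ℝ) := by exact_mod_cast (d+1).factorial_pos
    have hexpinv : (Real.exp (c * n))⁻¹ ≤ ((d+1).factorial : ℝ) / (c ^ (d+1) * (n:ℝ) ^ (d+1)) := by
      have hlow : c ^ (d+1) * (n:ℝ) ^ (d+1) / ((d+1).factorial : ℝ) ≤ Real.exp (c * n) := by
        have := Real.pow_div_factorial_le_exp (c * n) (mul_nonneg hcpos.le hn'.le) (d+1)
        rw [mul_pow] at this
        exact this
      have hlpos : (0:ℝ) < c ^ (d+1) * (n:ℝ) ^ (d+1) / ((d+1).factorial : ℝ) := by positivity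
      have := inv_anti₀ hlpos hlow
      rw [inv_div] at this
      exact this
    have htail : exp 1 * Real.sqrt n * Real.exp (-(c * n)) ≤ C2 * (n:ℝ) ^ (-(d:ℝ)) := by
      rw [Real.exp_neg, Real.rpow_neg hn'.le, Real.rpow_natCast]
      have key : exp 1 * Real.sqrt n * (Real.exp (c * n))⁻¹
          ≤ exp 1 * (n:ℝ) * (((d+1).factorial : ℝ) / (c ^ (d+1) * (n:ℝ) ^ (d+1))) := by
        gcongr
      have hnd : (n:ℝ) / ((n:ℝ) ^ (d+1)) = ((n:ℝ) ^ d)⁻¹ := by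
        rw [pow_succ]
        field_simp
      calc exp 1 * Real.sqrt n * (Real.exp (c * n))⁻¹
          ≤ exp 1 * (n:ℝ) * (((d+1).factorial : ℝ) / (c ^ (d+1) * (n:ℝ) ^ (d+1))) := key
        _ = (exp 1 * ((d+1).factorial : ℝ) / c ^ (d+1)) * ((n:ℝ) / ((n:ℝ) ^ (d+1))) := by
            ring
        _ = C2 * ((n:ℝ) ^ d)⁻¹ := by rw [hnd, hC2]
    have hmono : (n:ℝ) ^ (-(d:ℝ)) ≤ (n:ℝ) ^ (-(((d:ℝ) - 1) / 2)) := by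
      apply Real.rpow_le_rpow_of_exponent_le (by exact_mod_cast hn)
      have : (0:ℝ) ≤ (d:ℝ) := Nat.cast_nonneg d
      linarith
    calc (n.factorial:ℝ) / (∏ a, ((k a).factorial:ℝ)) * ∏ a, p a ^ k a
        = (n.factorial:ℝ) * ∏ a, (p a ^ k a / ((k a).factorial : ℝ)) := hLHS
      _ ≤ (n.factorial:ℝ) * (Real.exp S * (exp 1 / (n:ℝ)) ^ n) := by
          rw [← hprodeq]; exact hstep
      _ = ((n.factorial:ℝ) * (exp 1 / (n:ℝ)) ^ n) * Real.exp S := by ring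
      _ ≤ (exp 1 * Real.sqrt n) * Real.exp (-(c * n)) := by
          apply mul_le_mul hB (Real.exp_le_exp.mpr hSneg) (Real.exp_nonneg _) (by positivity)
      _ ≤ C2 * (n:ℝ) ^ (-(d:ℝ)) := htail
      _ ≤ C2 * (n:ℝ) ^ (-(((d:ℝ) - 1) / 2)) := mul_le_mul_of_nonneg_left hmono hC2pos.le
      _ ≤ max C1 C2 * (n:ℝ) ^ (-(((d:ℝ) - 1) / 2)) :=
          mul_le_mul_of_nonneg_right (le_max_right _ _) hrpos.le

end
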